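/- Let f₁ and f₂ be commutative fix-actions, let s be a network state, and let α and β be finite fix-action sequences such that the concatenated sequence α ∘ ⟨f₂, f₁⟩ ∘ β is applicable to s. Then the sequence α ∘ ⟨f₁, f₂⟩ ∘ β is also applicable to s, has the same total cost, and yields the same resulting state: s[α ∘ ⟨f₂, f₁⟩ ∘ β] = s[α ∘ ⟨f₁, f₂⟩ ∘ β]. -/

import Mathlib

/-- A fix-action over network propositions `P`: precondition and postcondition
are finite sets of literals (a literal is a pair of a proposition and a
polarity, `true` for a positive and `false` for a negative occurrence),
containing at most one literal per proposition, together with a strictly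
positive real cost. -/
structure FixAction (P : Type*) where
  pre : Finset (P × Bool)
  post : Finset (P × Bool)
  cost : ℝ
  cost_pos : 0 < cost
  pre_unique : ∀ (p : P) (b b' : Bool), (p, b) ∈ pre → (p, b') ∈ pre → b = b'
  post_unique : ∀ (p : P) (b b' : Bool), (p, b) ∈ post → (p, b') ∈ post → b = b'

variable {P : Type*} [DecidableEq P]

/-- A network state `s` satisfies a literal `(p, true)` iff `p ∈ s`,
and satisfies `(p, false)` iff `p ∉ s`. -/
def satLit (s : Finset P) (l : P × Bool) : Prop :=
  (l.1 ∈ s) ↔ l.2 = true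

/-- A fix-action is applicable to a state if the state satisfies every
literal of its precondition. -/
def FixAction.applicable (f : FixAction P) (s : Finset P) : Prop :=
  ∀ l ∈ f.pre, satLit s l

/-- The result `s[f]` of applying a fix-action: every proposition occurring
positively in `post f`, together with every proposition of `s` whose
negation does not occur in `post f`. -/
def FixAction.applyTo (f : FixAction P) (s : Finset P) : Finset P :=
  (f.post.filter (fun l => l.2 = true)).image Prod.fst ∪
    s.filter (fun p => (p, false) ∉ f.post)

/-- Applicability of a finite sequence of fix-actions to a state. -/
def seqApplicable (s : Finset P) : List (FixAction P) → Prop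
  | [] => True
  | f :: σ => f.applicable s ∧ seqApplicable (f.applyTo s) σ

/-- The result `s[σ]` of applying a sequence of fix-actions. -/
def seqApply (s : Finset P) : List (FixAction P) → Finset P
  | [] => s
  | f :: σ => seqApply (f.applyTo s) σ

/-- The cost of a sequence of fix-actions: the sum of the costs of its
elements. -/
noncomputable def seqCost (σ : List (FixAction P)) : ℝ :=
  (σ.map FixAction.cost).sum

/-- `f₁` disables `f₂` if some literal in `post f₁` is the negation of a
literal in `pre f₂`. -/
def disablesFix (f₁ f₂ : FixAction P) : Prop :=
  ∃ (p : P) (b : Bool), (p, b) ∈ f₁.post ∧ (p, !b) ∈ f₂.pre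

/-- `f₁` and `f₂` conflict if some literal in `post f₁` is the negation of a
literal in `post f₂`. -/
def conflictFix (f₁ f₂ : FixAction P) : Prop :=
  ∃ (p : P) (b : Bool), (p, b) ∈ f₁.post ∧ (p, !b) ∈ f₂.post

/-- `f₁` and `f₂` interfere if they conflict or either disables the other. -/
def interfereFix (f₁ f₂ : FixAction P) : Prop :=
  conflictFix f₁ f₂ ∨ disablesFix f₁ f₂ ∨ disablesFix f₂ f₁

/-- `f₁` enables `f₂` if some literal of `post f₁` belongs to `pre f₂` or
some literal of `post f₂` belongs to `pre f₁`. -/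
def enablesFix (f₁ f₂ : FixAction P) : Prop :=
  (∃ l ∈ f₁.post, l ∈ f₂.pre) ∨ (∃ l ∈ f₂.post, l ∈ f₁.pre)

/-- `f₁` and `f₂` are commutative if they do not interfere and neither
enables the other. -/
def commutativeFix (f₁ f₂ : FixAction P) : Prop :=
  ¬ interfereFix f₁ f₂ ∧ ¬ enablesFix f₁ f₂

lemma mem_applyTo (f : FixAction P) (s : Finset P) (p : P) :
    p ∈ f.applyTo s ↔ (p, true) ∈ f.post ∨ (p ∈ s ∧ (p, false) ∉ f.post) := by
  simp only [FixAction.applyTo, Finset.mem_union, Finset.mem_image, Finset.mem_filter]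
  constructor
  · rintro (⟨⟨q, b⟩, ⟨hb, hbt⟩, rfl⟩ | ⟨hp, hn⟩)
    · left; cases hbt; exact hb
    · right; exact ⟨hp, hn⟩
  · rintro (h | ⟨hp, hn⟩)
    · left; exact ⟨(p, true), ⟨h, rfl⟩, rfl⟩
    · right; exact ⟨hp, hn⟩

lemma swap_core (f₁ f₂ : FixAction P) (hcomm : commutativeFix f₁ f₂) (t : Finset P)
    (h2 : f₂.applicable t) (h1 : f₁.applicable (f₂.applyTo t)) :
    f₁.applicable t ∧ f₂.applicable (f₁.applyTo t) ∧
      f₂.applyTo (f₁.applyTo t) = f₁.applyTo (f₂.applyTo t) := by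
  obtain ⟨hni, hne⟩ := hcomm
  have hconf : ¬ conflictFix f₁ f₂ := fun h => hni (Or.inl h)
  have hd12 : ¬ disablesFix f₁ f₂ := fun h => hni (Or.inr (Or.inl h))
  have hd21 : ¬ disablesFix f₂ f₁ := fun h => hni (Or.inr (Or.inr h))
  -- f₂.post doesn't touch any proposition of f₁.pre
  have key1 : ∀ p b, (p, b) ∈ f₁.pre → ∀ b', (p, b') ∈ f₂.post → False := by
    intro p b hp b' hp'
    by_cases hbb : b' = b
    · exact hne (Or.inr ⟨(p, b), hbb ▸ hp', hp⟩)
    · have hb : b' = !b := by cases b <;> cases b' <;> simp_all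
      exact hd21 ⟨p, b', hp', by rw [hb, Bool.not_not]; exact hp⟩
  have key2 : ∀ p b, (p, b) ∈ f₂.pre → ∀ b', (p, b') ∈ f₁.post → False := by
    intro p b hp b' hp'
    by_cases hbb : b' = b
    · exact hne (Or.inl ⟨(p, b), hbb ▸ hp', hp⟩)
    · have hb : b' = !b := by cases b <;> cases b' <;> simp_all
      exact hd12 ⟨p, !b, hb ▸ hp', by simpa using hp⟩
  have h1t : f₁.applicable t := by
    intro l hl
    have := h1 l hl
    obtain ⟨p, b⟩ := l
    unfold satLit at this ⊢
    rw [mem_applyTo] at this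
    constructor
    · intro hp; exact this.mp (Or.inr ⟨hp, fun h => key1 p b hl false h⟩)
    · intro hb
      rcases this.mpr hb with h | ⟨hp, _⟩
      · exact absurd h (fun h => key1 p b hl true h)
      · exact hp
  refine ⟨h1t, ?_, ?_⟩
  · intro l hl
    have := h2 l hl
    obtain ⟨p, b⟩ := l
    unfold satLit at this ⊢
    rw [mem_applyTo]
    constructor
    · rintro (h | ⟨hp, _⟩)
      · exact absurd h (fun h => key2 p b hl true h)
      · exact this.mp hp
    · intro hb
      exact Or.inr ⟨this.mpr hb, fun h => key2 p b hl false h⟩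
  · ext p
    rw [mem_applyTo, mem_applyTo, mem_applyTo, mem_applyTo]
    have c1 : ¬ ((p, true) ∈ f₁.post ∧ (p, false) ∈ f₂.post) := by
      rintro ⟨h1', h2'⟩; exact hconf ⟨p, true, h1', by simpa using h2'⟩
    have c2 : ¬ ((p, false) ∈ f₁.post ∧ (p, true) ∈ f₂.post) := by
      rintro ⟨h1', h2'⟩; exact hconf ⟨p, false, h1', by simpa using h2'⟩
    tauto

lemma swap_aux (f₁ f₂ : FixAction P) (hcomm : commutativeFix f₁ f₂)
    (s : Finset P) (α β : List (FixAction P))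
    (happ : seqApplicable s (α ++ [f₂, f₁] ++ β)) :
    seqApplicable s (α ++ [f₁, f₂] ++ β) ∧
    seqApply s (α ++ [f₂, f₁] ++ β) = seqApply s (α ++ [f₁, f₂] ++ β) := by
  induction α generalizing s with
  | nil =>
    simp only [List.nil_append, seqApplicable, seqApply] at happ ⊢
    obtain ⟨h2, h1, hβ⟩ := happ
    obtain ⟨h1t, h2t, heq⟩ := swap_core f₁ f₂ hcomm s h2 h1
    exact ⟨⟨h1t, h2t, heq ▸ hβ⟩, by show seqApply (f₁.applyTo (f₂.applyTo s)) β = seqApply (f₂.applyTo (f₁.applyTo s)) β; rw [heq]⟩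
  | cons f α ih =>
    simp only [List.cons_append, seqApplicable, seqApply] at happ ⊢
    obtain ⟨hf, hrest⟩ := happ
    obtain ⟨ha, he⟩ := ih (f.applyTo s) hrest
    exact ⟨⟨hf, ha⟩, he⟩

/-- If `f₁` and `f₂` are commutative fix-actions and `α ++ [f₂, f₁] ++ β` is
applicable to `s`, then `α ++ [f₁, f₂] ++ β` is also applicable to `s`, has
the same total cost, and yields the same resulting state. -/
theorem commutative_fix_actions_swap_in_context
    {P : Type*} [DecidableEq P]
    (f₁ f₂ : FixAction P) (hcomm : commutativeFix f₁ f₂)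
    (s : Finset P) (α β : List (FixAction P))
    (happ : seqApplicable s (α ++ [f₂, f₁] ++ β)) :
    seqApplicable s (α ++ [f₁, f₂] ++ β) ∧
    seqCost (α ++ [f₁, f₂] ++ β) = seqCost (α ++ [f₂, f₁] ++ β) ∧
    seqApply s (α ++ [f₂, f₁] ++ β) = seqApply s (α ++ [f₁, f₂] ++ β) := by
  obtain ⟨ha, he⟩ := swap_aux f₁ f₂ hcomm s α β happ
  refine ⟨ha, ?_, he⟩
  simp [seqCost]; ring
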